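/- arXiv:1603.03986 — 2 statements merged into one kernel-verified Lean document; each statement's English description precedes it below -/
import Mathlib

section
/- Let x and t be real numbers with 1 - 2tx + t² > 0 and x ≠ t. Then 105·F(t,x)⁹ = 15·F^{(1)}(t,x)/(x-t)⁷ + 15·F^{(2)}(t,x)/(x-t)⁶ + 6·F^{(3)}(t,x)/(x-t)⁵ + F^{(4)}(t,x)/(x-t)⁴. -/
open Filter Topology

private lemma lgf_hasDerivAt_u (x s : ℝ) :
    HasDerivAt (fun s : ℝ => 1 - 2 * s * x + s ^ 2) (2 * s - 2 * x) s := by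
  have h1 : HasDerivAt (fun s : ℝ => s) 1 s := hasDerivAt_id s
  have h2 : HasDerivAt (fun s : ℝ => s ^ 2) (2 * s) s := by
    simpa using hasDerivAt_pow 2 s
  have h3 : HasDerivAt (fun s : ℝ => 2 * s * x) (2 * x) s := by
    have := (h1.const_mul 2).mul_const x
    simpa using this
  have h4 := (h3.const_sub 1).add h2
  exact h4.congr_deriv (by ring)

private lemma lgf_hasDerivAt_rpow (x s p : ℝ) (hs : 0 < 1 - 2 * s * x + s ^ 2) :
    HasDerivAt (fun s : ℝ => (1 - 2 * s * x + s ^ 2) ^ p)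
      ((2 * s - 2 * x) * p * (1 - 2 * s * x + s ^ 2) ^ (p - 1)) s :=
  (lgf_hasDerivAt_u x s).rpow_const (Or.inl hs.ne')

private lemma lgf_d0 (x s : ℝ) (hs : 0 < 1 - 2 * s * x + s ^ 2) :
    HasDerivAt (fun s : ℝ => (1 - 2 * s * x + s ^ 2) ^ (-(1:ℝ)/2))
      ((x - s) * (1 - 2 * s * x + s ^ 2) ^ (-(3:ℝ)/2)) s := by
  have h := lgf_hasDerivAt_rpow x s (-(1:ℝ)/2) hs
  have he : (-(1:ℝ)/2 - 1) = -(3:ℝ)/2 := by norm_num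
  rw [he] at h
  exact h.congr_deriv (by ring)

private lemma lgf_d1 (x s : ℝ) (hs : 0 < 1 - 2 * s * x + s ^ 2) :
    HasDerivAt (fun s : ℝ => (x - s) * (1 - 2 * s * x + s ^ 2) ^ (-(3:ℝ)/2))
      (-((1 - 2 * s * x + s ^ 2) ^ (-(3:ℝ)/2))
        + 3 * (x - s) ^ 2 * (1 - 2 * s * x + s ^ 2) ^ (-(5:ℝ)/2)) s := by
  have hr := lgf_hasDerivAt_rpow x s (-(3:ℝ)/2) hs
  have he : (-(3:ℝ)/2 - 1) = -(5:ℝ)/2 := by norm_num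
  rw [he] at hr
  have hl : HasDerivAt (fun s : ℝ => x - s) (-1) s := by
    simpa using (hasDerivAt_id s).const_sub x
  have h := hl.mul hr
  exact h.congr_deriv (by ring)

private lemma lgf_d2 (x s : ℝ) (hs : 0 < 1 - 2 * s * x + s ^ 2) :
    HasDerivAt (fun s : ℝ => -((1 - 2 * s * x + s ^ 2) ^ (-(3:ℝ)/2))
        + 3 * (x - s) ^ 2 * (1 - 2 * s * x + s ^ 2) ^ (-(5:ℝ)/2))
      (-9 * (x - s) * (1 - 2 * s * x + s ^ 2) ^ (-(5:ℝ)/2)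
        + 15 * (x - s) ^ 3 * (1 - 2 * s * x + s ^ 2) ^ (-(7:ℝ)/2)) s := by
  have hr3 := lgf_hasDerivAt_rpow x s (-(3:ℝ)/2) hs
  have he3 : (-(3:ℝ)/2 - 1) = -(5:ℝ)/2 := by norm_num
  rw [he3] at hr3
  have hr5 := lgf_hasDerivAt_rpow x s (-(5:ℝ)/2) hs
  have he5 : (-(5:ℝ)/2 - 1) = -(7:ℝ)/2 := by norm_num
  rw [he5] at hr5
  have hl : HasDerivAt (fun s : ℝ => x - s) (-1) s := by
    simpa using (hasDerivAt_id s).const_sub x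
  have hq : HasDerivAt (fun s : ℝ => 3 * (x - s) ^ 2) (3 * (2 * (x - s) ^ 1 * (-1))) s :=
    (hl.pow 2).const_mul 3
  have h := hr3.neg.add (hq.mul hr5)
  exact h.congr_deriv (by ring)

private lemma lgf_d3 (x s : ℝ) (hs : 0 < 1 - 2 * s * x + s ^ 2) :
    HasDerivAt (fun s : ℝ => -9 * (x - s) * (1 - 2 * s * x + s ^ 2) ^ (-(5:ℝ)/2)
        + 15 * (x - s) ^ 3 * (1 - 2 * s * x + s ^ 2) ^ (-(7:ℝ)/2))
      (9 * (1 - 2 * s * x + s ^ 2) ^ (-(5:ℝ)/2)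
        - 90 * (x - s) ^ 2 * (1 - 2 * s * x + s ^ 2) ^ (-(7:ℝ)/2)
        + 105 * (x - s) ^ 4 * (1 - 2 * s * x + s ^ 2) ^ (-(9:ℝ)/2)) s := by
  have hr5 := lgf_hasDerivAt_rpow x s (-(5:ℝ)/2) hs
  have he5 : (-(5:ℝ)/2 - 1) = -(7:ℝ)/2 := by norm_num
  rw [he5] at hr5
  have hr7 := lgf_hasDerivAt_rpow x s (-(7:ℝ)/2) hs
  have he7 : (-(7:ℝ)/2 - 1) = -(9:ℝ)/2 := by norm_num
  rw [he7] at hr7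
  have hl : HasDerivAt (fun s : ℝ => x - s) (-1) s := by
    simpa using (hasDerivAt_id s).const_sub x
  have hq1 : HasDerivAt (fun s : ℝ => -9 * (x - s)) (-9 * (-1)) s := hl.const_mul (-9)
  have hq3 : HasDerivAt (fun s : ℝ => 15 * (x - s) ^ 3) (15 * (3 * (x - s) ^ 2 * (-1))) s :=
    (hl.pow 3).const_mul 15
  have h := (hq1.mul hr5).add (hq3.mul hr7)
  exact h.congr_deriv (by ring)

/-- For real `x` and `t` with `1 - 2tx + t² > 0` and `x ≠ t`, the function
`F(t,x) = (1 - 2tx + t²)^(-1/2)` satisfies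
`105·F⁹ = 15·F⁽¹⁾/(x-t)⁷ + 15·F⁽²⁾/(x-t)⁶ + 6·F⁽³⁾/(x-t)⁵ + F⁽⁴⁾/(x-t)⁴`. -/
theorem legendre_genFun_pow_nine (x t : ℝ) (h : 1 - 2 * t * x + t ^ 2 > 0) (hxt : x ≠ t) :
    105 * ((1 - 2 * t * x + t ^ 2) ^ (-(1 : ℝ) / 2)) ^ 9
      = 15 * iteratedDeriv 1 (fun s : ℝ => (1 - 2 * s * x + s ^ 2) ^ (-(1 : ℝ) / 2)) t / (x - t) ^ 7
        + 15 * iteratedDeriv 2 (fun s : ℝ => (1 - 2 * s * x + s ^ 2) ^ (-(1 : ℝ) / 2)) t / (x - t) ^ 6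
        + 6 * iteratedDeriv 3 (fun s : ℝ => (1 - 2 * s * x + s ^ 2) ^ (-(1 : ℝ) / 2)) t / (x - t) ^ 5
        + iteratedDeriv 4 (fun s : ℝ => (1 - 2 * s * x + s ^ 2) ^ (-(1 : ℝ) / 2)) t / (x - t) ^ 4 := by
  have hU : IsOpen {s : ℝ | 0 < 1 - 2 * s * x + s ^ 2} := by
    apply isOpen_lt continuous_const
    continuity
  have ht : {s : ℝ | 0 < 1 - 2 * s * x + s ^ 2} ∈ 𝓝 t := hU.mem_nhds h
  set G1 : ℝ → ℝ := fun s => (x - s) * (1 - 2 * s * x + s ^ 2) ^ (-(3:ℝ)/2) with hG1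
  set G2 : ℝ → ℝ := fun s => -((1 - 2 * s * x + s ^ 2) ^ (-(3:ℝ)/2))
      + 3 * (x - s) ^ 2 * (1 - 2 * s * x + s ^ 2) ^ (-(5:ℝ)/2) with hG2
  set G3 : ℝ → ℝ := fun s => -9 * (x - s) * (1 - 2 * s * x + s ^ 2) ^ (-(5:ℝ)/2)
      + 15 * (x - s) ^ 3 * (1 - 2 * s * x + s ^ 2) ^ (-(7:ℝ)/2) with hG3
  set G4 : ℝ → ℝ := fun s => 9 * (1 - 2 * s * x + s ^ 2) ^ (-(5:ℝ)/2)
      - 90 * (x - s) ^ 2 * (1 - 2 * s * x + s ^ 2) ^ (-(7:ℝ)/2)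
      + 105 * (x - s) ^ 4 * (1 - 2 * s * x + s ^ 2) ^ (-(9:ℝ)/2) with hG4
  have e1 : deriv (fun s : ℝ => (1 - 2 * s * x + s ^ 2) ^ (-(1:ℝ)/2)) =ᶠ[𝓝 t] G1 :=
    eventually_of_mem ht fun s hs => (lgf_d0 x s hs).deriv
  have e2 : deriv G1 =ᶠ[𝓝 t] G2 :=
    eventually_of_mem ht fun s hs => (lgf_d1 x s hs).deriv
  have e3 : deriv G2 =ᶠ[𝓝 t] G3 :=
    eventually_of_mem ht fun s hs => (lgf_d2 x s hs).deriv
  have e4 : deriv G3 =ᶠ[𝓝 t] G4 :=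
    eventually_of_mem ht fun s hs => (lgf_d3 x s hs).deriv
  have v1 : iteratedDeriv 1 (fun s : ℝ => (1 - 2 * s * x + s ^ 2) ^ (-(1:ℝ)/2)) t = G1 t := by
    rw [iteratedDeriv_one]
    exact e1.self_of_nhds
  have v2 : iteratedDeriv 2 (fun s : ℝ => (1 - 2 * s * x + s ^ 2) ^ (-(1:ℝ)/2)) t = G2 t := by
    rw [show (2:ℕ) = 1 + 1 from rfl, iteratedDeriv_succ, iteratedDeriv_one]
    rw [e1.deriv_eq]
    exact e2.self_of_nhds
  have v3 : iteratedDeriv 3 (fun s : ℝ => (1 - 2 * s * x + s ^ 2) ^ (-(1:ℝ)/2)) t = G3 t := by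
    rw [show (3:ℕ) = 1 + 1 + 1 from rfl, iteratedDeriv_succ, iteratedDeriv_succ,
      iteratedDeriv_one]
    rw [(e1.deriv).deriv_eq, e2.deriv_eq]
    exact e3.self_of_nhds
  have v4 : iteratedDeriv 4 (fun s : ℝ => (1 - 2 * s * x + s ^ 2) ^ (-(1:ℝ)/2)) t = G4 t := by
    rw [show (4:ℕ) = 1 + 1 + 1 + 1 from rfl, iteratedDeriv_succ, iteratedDeriv_succ,
      iteratedDeriv_succ, iteratedDeriv_one]
    rw [((e1.deriv).deriv).deriv_eq, (e2.deriv).deriv_eq, e3.deriv_eq]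
    exact e4.self_of_nhds
  rw [v1, v2, v3, v4, hG1, hG2, hG3, hG4]
  simp only
  have hpow : ((1 - 2 * t * x + t ^ 2) ^ (-(1:ℝ)/2)) ^ (9:ℕ)
      = (1 - 2 * t * x + t ^ 2) ^ (-(9:ℝ)/2) := by
    rw [← Real.rpow_natCast ((1 - 2 * t * x + t ^ 2) ^ (-(1:ℝ)/2)) 9,
      ← Real.rpow_mul h.le]
    norm_num
  rw [hpow]
  have hd : x - t ≠ 0 := sub_ne_zero.mpr hxt
  -- need relation between the rpow atoms: u^(-5/2) = u^(-3/2) * u^(-1), etc.?  No: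
  -- the identity holds treating them as independent atoms.
  field_simp
  ring
end

section
/- (Closed form for a_2.) For every integer N ≥ 2, a_2(N+1) = 2^{N-1}·(N-1)! + Σ_{l=0}^{N-2} ⟨2N-2⟩_l · (2N-2l-3)!!. -/
/-- The coefficients `a_i(N)` defined by `a_1(1) = 1`, `a_1(N+1) = (2N-1)·a_1(N)`,
`a_{N+1}(N+1) = a_N(N)`, and `a_i(N+1) = (2N-i)·a_i(N) + a_{i-1}(N)` for `2 ≤ i ≤ N`
(and `a_i(N) = 0` when `i = 0` or `i > N`). -/
def legA : ℕ → ℕ → ℤ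
  | _, 0 => 0
  | i, 1 => if i = 1 then 1 else 0
  | i, (N + 2) => if i = 0 ∨ N + 2 < i then 0
      else (2 * (N + 1) - (i : ℤ)) * legA i (N + 1) + legA (i - 1) (N + 1)

/-- `⟨m⟩_l = m(m-2)(m-4)···(m-2(l-1))`, with `⟨m⟩_0 = 1`. -/
def descDouble (m : ℤ) (l : ℕ) : ℤ := ∏ j ∈ Finset.range l, (m - 2 * j)

lemma descDouble_succ' (m : ℤ) (l : ℕ) :
    descDouble m (l + 1) = m * descDouble (m - 2) l := by
  unfold descDouble
  rw [Finset.prod_range_succ']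
  simp only [Nat.cast_add, Nat.cast_one, Nat.cast_zero, mul_zero, sub_zero]
  rw [mul_comm]
  congr 1
  exact Finset.prod_congr rfl (fun j _ => by ring)

lemma legA_one (N : ℕ) : legA 1 (N + 1) = (Nat.doubleFactorial (2 * N - 1) : ℤ) := by
  induction N with
  | zero => simp [legA, Nat.doubleFactorial]
  | succ M ih =>
    rw [show M + 1 + 1 = M + 2 from rfl, legA]
    rw [if_neg (by omega)]
    simp only [Nat.sub_self]
    rw [ih]
    have h0 : legA 0 (M + 1) = 0 := by
      cases M with
      | zero => simp [legA]
      | succ K => rw [legA, if_pos (Or.inl rfl)]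
    rw [h0, add_zero]
    cases M with
    | zero => simp [Nat.doubleFactorial]
    | succ K =>
      have e1 : 2 * (K + 1) - 1 = 2 * K + 1 := by omega
      have e2 : 2 * (K + 1 + 1) - 1 = 2 * K + 1 + 2 := by omega
      rw [e1, e2, Nat.doubleFactorial]
      push_cast
      ring

/-- Closed form for `a_2`: for `N ≥ 2`,
`a_2(N+1) = 2^(N-1)·(N-1)! + Σ_{l=0}^{N-2} ⟨2N-2⟩_l · (2N-2l-3)!!`. -/
theorem legA_two (N : ℕ) (hN : 2 ≤ N) :
    legA 2 (N + 1)
      = 2 ^ (N - 1) * (Nat.factorial (N - 1) : ℤ)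
        + ∑ l ∈ Finset.range (N - 1),
            descDouble ((2 * N : ℤ) - 2) l * (Nat.doubleFactorial (2 * N - 2 * l - 3) : ℤ) := by
  obtain ⟨M, rfl⟩ : ∃ M, N = M + 2 := ⟨N - 2, by omega⟩
  clear hN
  induction M with
  | zero =>
    norm_num [legA, descDouble, Nat.doubleFactorial, Nat.factorial]
  | succ M ih =>
    -- unfold the recursion: legA 2 (M+4) = (2*(M+3)-2) * legA 2 (M+3) + legA 1 (M+3)
    rw [show M + 1 + 2 + 1 = (M + 2) + 2 from rfl, legA, if_neg (by omega)]
    rw [show (2 : ℕ) - 1 = 1 from rfl, legA_one, ih]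
    simp only [show M + 2 - 1 = M + 1 from rfl, show M + 1 + 2 - 1 = M + 2 from rfl]
    have hsum : (∑ l ∈ Finset.range (M + 2),
          descDouble (2 * ((M + 1 + 2 : ℕ) : ℤ) - 2) l
            * ((Nat.doubleFactorial (2 * (M + 1 + 2) - 2 * l - 3)) : ℤ))
        = (2 * ((M : ℤ) + 2)) * (∑ l ∈ Finset.range (M + 1),
            descDouble (2 * ((M + 2 : ℕ) : ℤ) - 2) l
              * ((Nat.doubleFactorial (2 * (M + 2) - 2 * l - 3)) : ℤ))
          + ((Nat.doubleFactorial (2 * (M + 2) - 1)) : ℤ) := by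
      rw [Finset.sum_range_succ', Finset.mul_sum]
      congr 1
      · apply Finset.sum_congr rfl
        intro l _
        rw [descDouble_succ']
        have e1 : 2 * ((M + 1 + 2 : ℕ) : ℤ) - 2 - 2 = 2 * ((M + 2 : ℕ) : ℤ) - 2 := by
          push_cast; ring
        have e2 : 2 * (M + 1 + 2) - 2 * (l + 1) - 3 = 2 * (M + 2) - 2 * l - 3 := by omega
        have e3 : 2 * ((M + 1 + 2 : ℕ) : ℤ) - 2 = 2 * ((M : ℤ) + 2) := by push_cast; ring
        rw [e1, e2, e3]
        ring
      · have e4 : 2 * (M + 1 + 2) - 2 * 0 - 3 = 2 * (M + 2) - 1 := by omega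
        simp [descDouble, e4, show 2 * (M + 1 + 2) - 3 = 2 * (M + 2) - 1 by omega]
    rw [hsum]
    have hfac : ((Nat.factorial (M + 2)) : ℤ) = ((M : ℤ) + 2) * ((Nat.factorial (M + 1)) : ℤ) := by
      rw [show M + 2 = (M + 1) + 1 from rfl, Nat.factorial_succ]
      push_cast
      ring
    rw [hfac]
    push_cast
    ring
end
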